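/- Let a, b, c be positive reals with b/a ≥ e^(2e) and e^e > (c/b)². Define φ(x) = √(x·ln(ln x)) for x ≥ e^e and φ(x) = 1 for x < e^e, and U(x) = -a·x + 2b·φ(x) + c. Then U(x) < 0 for every x > (18b²/a²)·ln(ln(3b/a)). -/

import Mathlib

open Real

set_option maxHeartbeats 800000

noncomputable def phi (x : ℝ) : ℝ :=
  if Real.exp (Real.exp 1) ≤ x then Real.sqrt (x * Real.log (Real.log x)) else 1

/-- if b/a ≥ e^(2e) and e^e > (c/b)², then
U(x) = -a x + 2 b φ(x) + c < 0 for every x > (18 b²/a²) ln ln (3b/a). -/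
theorem stmt1 (a b c : ℝ) (ha : 0 < a) (hb : 0 < b) (hc : 0 < c)
    (hba : Real.exp (2 * Real.exp 1) ≤ b / a)
    (hcb : (c / b) ^ 2 < Real.exp (Real.exp 1)) :
    ∀ x : ℝ, 18 * b ^ 2 / a ^ 2 * Real.log (Real.log (3 * b / a)) < x →
      -a * x + 2 * b * phi x + c < 0 := by
  intro x hx
  have he : (2.7:ℝ) < Real.exp 1 := by
    have := Real.exp_one_gt_d9; norm_num at this ⊢; linarith
  set r : ℝ := b / a with hrdef
  have hr0 : 0 < r := div_pos hb ha
  have hs0 : 0 < 3 * r := by linarith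
  set L : ℝ := Real.log (Real.log (3 * r)) with hLdef
  have hab : b = a * r := by rw [hrdef]; field_simp
  have hxr : 18 * r ^ 2 * L < x := by
    have h1 : (3 : ℝ) * b / a = 3 * r := by rw [hrdef]; ring
    have h2 : 18 * b ^ 2 / a ^ 2 = 18 * r ^ 2 := by
      rw [hrdef, div_pow, mul_div_assoc]
    rw [h2, h1] at hx
    exact hx
  -- basic bounds on r, log(3r), L
  have hr1 : (1:ℝ) ≤ r := le_trans (Real.one_le_exp (by positivity)) hba
  have hlogr : 2 * Real.exp 1 ≤ Real.log r := (Real.le_log_iff_exp_le hr0).2 hba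
  have hlog3r_ge : 2 * Real.exp 1 ≤ Real.log (3 * r) := by
    have h := Real.log_le_log hr0 (show r ≤ 3 * r by linarith)
    linarith
  have hlogs4 : (4:ℝ) ≤ Real.log (3 * r) := by linarith
  have hlogs_pos : 0 < Real.log (3 * r) := by linarith
  have hL1 : (1:ℝ) ≤ L := by
    rw [hLdef]
    exact (Real.le_log_iff_exp_le hlogs_pos).2 (by linarith)
  have hL4 : Real.log 4 ≤ L := by
    rw [hLdef]
    exact Real.log_le_log (by norm_num) hlogs4
  set x0 : ℝ := 18 * r ^ 2 * L with hx0def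
  have hL0 : 0 < L := by linarith
  have hx00 : 0 < x0 := by rw [hx0def]; positivity
  have hrexp : Real.exp (Real.exp 1) ≤ r := by
    refine le_trans (Real.exp_le_exp.2 (by linarith)) hba
  have hx0_ge : Real.exp (Real.exp 1) ≤ x0 := by
    have h1 : r ≤ r ^ 2 := by nlinarith
    have h2 : r ^ 2 ≤ x0 := by rw [hx0def]; nlinarith
    linarith
  have hxpos : 0 < x := lt_trans hx00 hxr
  have hx_ge : Real.exp (Real.exp 1) ≤ x := le_trans hx0_ge hxr.le
  have hlogx0_1 : (1:ℝ) ≤ Real.log x0 := by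
    refine (Real.le_log_iff_exp_le hx00).2 (le_trans ?_ hx0_ge)
    exact Real.exp_le_exp.2 (by linarith)
  have hlogx0_pos : 0 < Real.log x0 := by linarith
  have hlogx_1 : (1:ℝ) ≤ Real.log x := by
    refine (Real.le_log_iff_exp_le hxpos).2 (le_trans ?_ hx_ge)
    exact Real.exp_le_exp.2 (by linarith)
  have hlogx_pos : 0 < Real.log x := by linarith
  have hllx1 : (1:ℝ) ≤ Real.log (Real.log x) := by
    refine (Real.le_log_iff_exp_le hlogx_pos).2 ?_
    exact (Real.le_log_iff_exp_le hxpos).2 hx_ge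
  -- log x0 ≤ 4 log (3r)
  have hLs : L ≤ Real.log (3 * r) - 1 := by
    rw [hLdef]; exact Real.log_le_sub_one_of_pos hlogs_pos
  have hlog_s_le : Real.log (3 * r) ≤ 3 * r - 1 := Real.log_le_sub_one_of_pos hs0
  have hx0_le : x0 ≤ (3 * r) ^ 4 := by
    rw [hx0def]
    have hL3r : L ≤ 3 * r := by linarith
    have h34 : r ^ 3 ≤ r ^ 4 := pow_le_pow_right₀ hr1 (by norm_num)
    nlinarith [mul_le_mul_of_nonneg_left hL3r (show (0:ℝ) ≤ 18 * r ^ 2 by positivity),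
      pow_nonneg hr0.le 4]
  have hlogx0_le : Real.log x0 ≤ 4 * Real.log (3 * r) := by
    have h := Real.log_le_log hx00 hx0_le
    rwa [Real.log_pow] at h
    
  have hllx0 : Real.log (Real.log x0) ≤ 2 * L := by
    have h1 : Real.log (Real.log x0) ≤ Real.log (4 * Real.log (3 * r)) :=
      Real.log_le_log hlogx0_pos hlogx0_le
    rw [Real.log_mul (by norm_num) (ne_of_gt hlogs_pos)] at h1
    rw [hLdef] at *
    linarith
  -- increment bounds
  have hstep1 : Real.log x - Real.log x0 ≤ (x - x0) / x0 := by
    have h1 : Real.log (x / x0) ≤ x / x0 - 1 :=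
      Real.log_le_sub_one_of_pos (by positivity)
    rw [Real.log_div (ne_of_gt hxpos) (ne_of_gt hx00)] at h1
    have h2 : x / x0 - 1 = (x - x0) / x0 := by field_simp
    linarith
  have hstep2 : Real.log (Real.log x) - Real.log (Real.log x0) ≤
      (Real.log x - Real.log x0) / Real.log x0 := by
    have h1 : Real.log (Real.log x / Real.log x0) ≤ Real.log x / Real.log x0 - 1 :=
      Real.log_le_sub_one_of_pos (by positivity)
    rw [Real.log_div (ne_of_gt hlogx_pos) (ne_of_gt hlogx0_pos)] at h1
    have h2 : Real.log x / Real.log x0 - 1 = (Real.log x - Real.log x0) / Real.log x0 := by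
      field_simp
    linarith
  have hlogx_mono : Real.log x0 ≤ Real.log x := Real.log_le_log hx00 hxr.le
  have hllx_le : Real.log (Real.log x) ≤ 2 * L + (x - x0) / x0 := by
    have h3 : (Real.log x - Real.log x0) / Real.log x0 ≤ Real.log x - Real.log x0 :=
      div_le_self (by linarith) hlogx0_1
    linarith
  -- key inequality 9 r² ln ln x < x
  have hkey : 9 * r ^ 2 * Real.log (Real.log x) < x := by
    have h1 : 9 * r ^ 2 * Real.log (Real.log x) ≤ 9 * r ^ 2 * (2 * L + (x - x0) / x0) :=
      mul_le_mul_of_nonneg_left hllx_le (by positivity)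
    have h2 : 9 * r ^ 2 * (2 * L + (x - x0) / x0) = x0 + (x - x0) / (2 * L) := by
      rw [hx0def]; field_simp; ring
    have h3 : (x - x0) / (2 * L) ≤ (x - x0) / 2 := by
      apply div_le_div_of_nonneg_left (by linarith) (by norm_num) (by linarith)
    linarith
  -- phi x is the sqrt branch
  have hphix : phi x = Real.sqrt (x * Real.log (Real.log x)) := by
    unfold phi; rw [if_pos hx_ge]
  -- sqrt bound
  have hsqrt : Real.sqrt (x * Real.log (Real.log x)) < x / (3 * r) := by
    rw [Real.sqrt_lt' (by positivity), div_pow, lt_div_iff₀ (by positivity)]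
    nlinarith [mul_lt_mul_of_pos_left hkey hxpos]
  have h2b : 2 * b * (x / (3 * r)) = 2 * a * x / 3 := by
    rw [hab]; field_simp
  have hphibound : 2 * b * phi x < 2 * a * x / 3 := by
    rw [hphix, ← h2b]
    exact mul_lt_mul_of_pos_left hsqrt (by positivity)
  -- c < a x / 3
  have hcb' : c < b * Real.exp (Real.exp 1 / 2) := by
    have hsq : Real.exp (Real.exp 1) = Real.exp (Real.exp 1 / 2) ^ 2 := by
      rw [sq, ← Real.exp_add]; congr 1; ring
    rw [hsq] at hcb
    have h1 : c / b < Real.exp (Real.exp 1 / 2) :=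
      lt_of_pow_lt_pow_left₀ 2 (Real.exp_pos _).le hcb
    rwa [div_lt_iff₀ hb, mul_comm] at h1
  have hcx : c < a * x / 3 := by
    have hexp_r : Real.exp (Real.exp 1 / 2) ≤ 6 * r := by
      have h1 : Real.exp (Real.exp 1 / 2) ≤ Real.exp (2 * Real.exp 1) :=
        Real.exp_le_exp.2 (by linarith)
      linarith
    have h2 : c < b * (6 * r) := by
      refine lt_of_lt_of_le hcb' ?_
      exact mul_le_mul_of_nonneg_left hexp_r hb.le
    have h3 : b * (6 * r) ≤ a * x0 / 3 := by
      rw [hab, hx0def]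
      nlinarith [mul_le_mul_of_nonneg_left hL1 (show (0:ℝ) ≤ 6 * a * r ^ 2 by positivity)]
    nlinarith
  linarith
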